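/- Every ∃∀-formula is equivalent over all chains to a conjunction of ∃∀-formulas each having at most two free variables. -/

import Mathlib

/-- Syntax of the temporal logic TL(U,S) with strict Until and strict Since. -/
inductive TL (σ : Type) : Type
  | tt : TL σ
  | atom : σ → TL σ
  | neg : TL σ → TL σ
  | or : TL σ → TL σ → TL σ
  | and : TL σ → TL σ → TL σ
  | until_ : TL σ → TL σ → TL σ
  | since : TL σ → TL σ → TL σ

/-- Semantics of TL(U,S) over a chain: a linear order `T` with interpretation `I`. -/
def TL.sat {σ T : Type} [LinearOrder T] (I : σ → Set T) : TL σ → T → Prop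
  | .tt, _ => True
  | .atom p, t => t ∈ I p
  | .neg F, t => ¬ TL.sat I F t
  | .or F G, t => TL.sat I F t ∨ TL.sat I G t
  | .and F G, t => TL.sat I F t ∧ TL.sat I G t
  | .until_ F G, t => ∃ t', t < t' ∧ TL.sat I G t' ∧ ∀ s, t < s → s < t' → TL.sat I F s
  | .since F G, t => ∃ t', t' < t ∧ TL.sat I G t' ∧ ∀ s, t' < s → s < t → TL.sat I F s

/-- K⁻(F) := ¬((¬F) S True). -/
def TL.kminus {σ : Type} (F : TL σ) : TL σ := .neg (.since (.neg F) .tt)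

/-- K⁺(F) := ¬((¬F) U True). -/
def TL.kplus {σ : Type} (F : TL σ) : TL σ := .neg (.until_ (.neg F) .tt)

/-- G F := ¬(True U ¬F): F holds everywhere strictly after the current point. -/
def TL.G {σ : Type} (F : TL σ) : TL σ := .neg (.until_ .tt (.neg F))

/-- G⁻ F := ¬(True S ¬F): F holds everywhere strictly before the current point. -/
def TL.Gm {σ : Type} (F : TL σ) : TL σ := .neg (.since .tt (.neg F))

/-- Syntax of FOMLO: first-order monadic logic of order (variables are natural numbers). -/
inductive FO (σ : Type) : Type
  | lt : ℕ → ℕ → FO σ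
  | eq : ℕ → ℕ → FO σ
  | atom : σ → ℕ → FO σ
  | neg : FO σ → FO σ
  | or : FO σ → FO σ → FO σ
  | and : FO σ → FO σ → FO σ
  | ex : ℕ → FO σ → FO σ
  | all : ℕ → FO σ → FO σ

/-- Semantics of FOMLO over a chain, with a valuation of the variables. -/
def FO.sat {σ T : Type} [LinearOrder T] (I : σ → Set T) : FO σ → (ℕ → T) → Prop
  | .lt i j, v => v i < v j
  | .eq i j, v => v i = v j
  | .atom p i, v => v i ∈ I p
  | .neg φ, v => ¬ FO.sat I φ v
  | .or φ ψ, v => FO.sat I φ v ∨ FO.sat I ψ v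
  | .and φ ψ, v => FO.sat I φ v ∧ FO.sat I ψ v
  | .ex i φ, v => ∃ t, FO.sat I φ (Function.update v i t)
  | .all i φ, v => ∀ t, FO.sat I φ (Function.update v i t)

/-- Free variables of a FOMLO formula. -/
def FO.freeVars {σ : Type} : FO σ → Set ℕ
  | .lt i j => {i, j}
  | .eq i j => {i, j}
  | .atom _ i => {i}
  | .neg φ => φ.freeVars
  | .or φ ψ => φ.freeVars ∪ ψ.freeVars
  | .and φ ψ => φ.freeVars ∪ ψ.freeVars
  | .ex i φ => φ.freeVars \ {i}
  | .all i φ => φ.freeVars \ {i}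

/-- Quantifier-free one-variable (propositional) formulas over the monadic predicates. -/
inductive QF (σ : Type) : Type
  | tt : QF σ
  | atom : σ → QF σ
  | neg : QF σ → QF σ
  | or : QF σ → QF σ → QF σ
  | and : QF σ → QF σ → QF σ

def QF.sat {σ T : Type} (I : σ → Set T) : QF σ → T → Prop
  | .tt, _ => True
  | .atom p, t => t ∈ I p
  | .neg φ, t => ¬ QF.sat I φ t
  | .or φ ψ, t => QF.sat I φ t ∨ QF.sat I ψ t
  | .and φ ψ, t => QF.sat I φ t ∧ QF.sat I ψ t

/-- The propositional temporal formula corresponding to a quantifier-free formula. -/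
def QF.toTL {σ : Type} : QF σ → TL σ
  | .tt => .tt
  | .atom p => .atom p
  | .neg φ => .neg φ.toTL
  | .or φ ψ => .or φ.toTL ψ.toTL
  | .and φ ψ => .and φ.toTL ψ.toTL

/-- An ∃∀-formula over the monadic signature `σ` with free variables `z₀,…,z_m`:
`∃ x_n … x₀, (⋀_k z_k = x_{idx k}) ∧ x₀ < … < x_n ∧ ⋀_j α_j(x_j) ∧`
each `βmid j` holds throughout the open interval `(x_j, x_{j+1})`,
`βhi` holds everywhere after `x_n`, and `βlo` holds everywhere before `x₀`. -/
structure EAForm (σ : Type) (m : ℕ) where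
  n : ℕ
  idx : Fin (m + 1) → Fin (n + 1)
  α : Fin (n + 1) → QF σ
  βmid : Fin n → QF σ
  βlo : QF σ
  βhi : QF σ

/-- Semantics of ∃∀-formulas. -/
def EAForm.sat {σ : Type} {m : ℕ} {T : Type} [LinearOrder T] (e : EAForm σ m)
    (I : σ → Set T) (z : Fin (m + 1) → T) : Prop :=
  ∃ x : Fin (e.n + 1) → T, StrictMono x ∧
    (∀ k, z k = x (e.idx k)) ∧
    (∀ j, (e.α j).sat I (x j)) ∧
    (∀ j : Fin e.n, ∀ y, x j.castSucc < y → y < x j.succ → (e.βmid j).sat I y) ∧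
    (∀ y, y < x 0 → e.βlo.sat I y) ∧
    (∀ y, x (Fin.last e.n) < y → e.βhi.sat I y)

/-- Satisfaction of a disjunction of ∃∀-formulas. -/
def EADisj {σ : Type} {m : ℕ} {T : Type} [LinearOrder T] (L : List (EAForm σ m))
    (I : σ → Set T) (z : Fin (m + 1) → T) : Prop :=
  ∃ f ∈ L, f.sat I z

/-- A linear order is Dedekind complete if every nonempty bounded-above subset has a
least upper bound and every nonempty bounded-below subset has a greatest lower bound. -/
def DedekindComplete (T : Type) [LinearOrder T] : Prop :=
  (∀ S : Set T, S.Nonempty → BddAbove S → ∃ a, IsLUB S a) ∧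
  (∀ S : Set T, S.Nonempty → BddBelow S → ∃ a, IsGLB S a)

/-- The canonical TL(U,S)-expansion of a chain: one unary predicate for each
TL(U,S)-formula `A`, interpreted as the set of points satisfying `A`. -/
def canonExp {σ T : Type} [LinearOrder T] (I : σ → Set T) : TL σ → Set T :=
  fun A => {t | A.sat I t}

/-- `[α₀,β₁,α₁,…,β_n,α_n](z₀,z₁)` : there are `z₀ = x₀ < x₁ < … < x_n = z₁` with each
`a j` holding at `x_j` and `b j` holding throughout `(x_j, x_{j+1})`
(`b j` stands for `β_{j+1}`). -/
def chainSat {σ T : Type} [LinearOrder T] (I : σ → Set T) (n : ℕ) (a b : ℕ → QF σ)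
    (z₀ z₁ : T) : Prop :=
  ∃ x : Fin (n + 1) → T, x 0 = z₀ ∧ x (Fin.last n) = z₁ ∧ StrictMono x ∧
    (∀ j : Fin (n + 1), (a j.val).sat I (x j)) ∧
    (∀ j : Fin n, ∀ y, x j.castSucc < y → y < x j.succ → (b j.val).sat I y)

/-- `nestU [(B₁,A₁),…,(B_k,A_k)] tail = B₁ U (A₁ ∧ (B₂ U (A₂ ∧ … (B_k U (A_k ∧ tail))…)))`. -/
def nestU {σ : Type} : List (TL σ × TL σ) → TL σ → TL σ
  | [], tail => tail
  | (B, A) :: rest, tail => B.until_ (A.and (nestU rest tail))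

/-- `nestS [(B₁,A₁),…,(B_k,A_k)] tail = B₁ S (A₁ ∧ (B₂ S (A₂ ∧ … (B_k S (A_k ∧ tail))…)))`. -/
def nestS {σ : Type} : List (TL σ × TL σ) → TL σ → TL σ
  | [], tail => tail
  | (B, A) :: rest, tail => B.since (A.and (nestS rest tail))

/-- `α_i` as a temporal formula, extended by `True` out of range. -/
def EAForm.aExt {σ : Type} {m : ℕ} (e : EAForm σ m) (i : ℕ) : TL σ :=
  if h : i < e.n + 1 then (e.α ⟨i, h⟩).toTL else .tt

/-- `β_{i+1}` (interval `(x_i, x_{i+1})`) as a temporal formula, `True` out of range. -/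
def EAForm.bExt {σ : Type} {m : ℕ} (e : EAForm σ m) (i : ℕ) : TL σ :=
  if h : i < e.n then (e.βmid ⟨i, h⟩).toTL else .tt

/-- The future part `A_k ∧ (B_{k+1} U (A_{k+1} ∧ … (A_n ∧ G B_{n+1})…))` of the
translation of a one-free-variable ∃∀-formula (with `z₀ = x_k`). -/
def EAForm.futureTL {σ : Type} (e : EAForm σ 0) : TL σ :=
  (e.aExt (e.idx 0).val).and
    (nestU (List.ofFn (fun j : Fin (e.n - (e.idx 0).val) =>
        (e.bExt ((e.idx 0).val + j.val), e.aExt ((e.idx 0).val + j.val + 1))))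
      e.βhi.toTL.G)

/-- The past part `A_k ∧ (B_k S (A_{k-1} ∧ … (A₀ ∧ G⁻ B₀)…))` of the translation. -/
def EAForm.pastTL {σ : Type} (e : EAForm σ 0) : TL σ :=
  (e.aExt (e.idx 0).val).and
    (nestS (List.ofFn (fun j : Fin (e.idx 0).val =>
        (e.bExt ((e.idx 0).val - 1 - j.val), e.aExt ((e.idx 0).val - 1 - j.val))))
      e.βlo.toTL.Gm)

/-- `Fseq a b n j` is the temporal formula `F_{n-j}` where `F_n := α_n` and
`F_{i-1} := α_{i-1} ∧ (β_i U F_i)`; here `b i` stands for `β_{i+1}`. -/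
def Fseq {σ : Type} (a b : ℕ → QF σ) (n : ℕ) : ℕ → TL σ
  | 0 => (a n).toTL
  | j + 1 => ((a (n - j - 1)).toTL).and (((b (n - j - 1)).toTL).until_ (Fseq a b n j))

/-- Syntax of the temporal logic TL(U,K⁻) with strict Until and the modality K⁻. -/
inductive TLK (σ : Type) : Type
  | tt : TLK σ
  | atom : σ → TLK σ
  | neg : TLK σ → TLK σ
  | or : TLK σ → TLK σ → TLK σ
  | and : TLK σ → TLK σ → TLK σ
  | until_ : TLK σ → TLK σ → TLK σ
  | kminus : TLK σ → TLK σ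

/-- Semantics of TL(U,K⁻): `K⁻(F)` holds at `t` iff `t = sup{t' < t : F(t')}`. -/
def TLK.sat {σ T : Type} [LinearOrder T] (I : σ → Set T) : TLK σ → T → Prop
  | .tt, _ => True
  | .atom p, t => t ∈ I p
  | .neg F, t => ¬ TLK.sat I F t
  | .or F G, t => TLK.sat I F t ∨ TLK.sat I G t
  | .and F G, t => TLK.sat I F t ∧ TLK.sat I G t
  | .until_ F G, t => ∃ t', t < t' ∧ TLK.sat I G t' ∧ ∀ s, t < s → s < t' → TLK.sat I F s
  | .kminus F, t => IsLUB {t' | t' < t ∧ TLK.sat I F t'} t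

/-- Syntactically future TL(U,K⁻) formulas: Boolean combinations of atoms and
Until-formulas. -/
inductive SynFuture {σ : Type} : TLK σ → Prop
  | tt : SynFuture .tt
  | atom (p : σ) : SynFuture (.atom p)
  | until_ (F G : TLK σ) : SynFuture (.until_ F G)
  | neg {F} : SynFuture F → SynFuture (.neg F)
  | or {F G} : SynFuture F → SynFuture G → SynFuture (.or F G)
  | and {F G} : SynFuture F → SynFuture G → SynFuture (.and F G)

/-- The subchain of a chain restricted to `[t₀,∞)`: the interpretation induced on the
subtype `{t // t₀ ≤ t}`. -/
def restrictI {σ T : Type} (I : σ → Set T) [LinearOrder T] (t₀ : T) :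
    σ → Set {t : T // t₀ ≤ t} :=
  fun p => {s | s.val ∈ I p}

/-- A (z₀,z₁)-∃∀ formula: either `z₀ > z₁`, or `z₀ = z₁`, or a formula
`[α₀,β₁,…,β_n,α_n](z₀,z₁)`. -/
inductive IntervalEA (σ : Type) : Type
  | gt : IntervalEA σ
  | eq : IntervalEA σ
  | chain (n : ℕ) (a b : ℕ → QF σ) : IntervalEA σ

def IntervalEA.sat {σ T : Type} [LinearOrder T] (I : σ → Set T) :
    IntervalEA σ → T → T → Prop
  | .gt, z₀, z₁ => z₁ < z₀
  | .eq, z₀, z₁ => z₀ = z₁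
  | .chain n a b, z₀, z₁ => chainSat I n a b z₀ z₁

namespace EA2V

variable {σ : Type} {m : ℕ}

/-- Segment formula: `z₀ = x₀ < … < x_d = z₁` carrying the α/β data of `e`
shifted by `c`. -/
def segF (e : EAForm σ m) (c d : ℕ) (h : c + d ≤ e.n) : EAForm σ 1 where
  n := d
  idx := ![0, Fin.last d]
  α := fun j => e.α ⟨c + j.val, by have := j.isLt; omega⟩
  βmid := fun j => e.βmid ⟨c + j.val, by have := j.isLt; omega⟩
  βlo := .tt
  βhi := .tt

/-- Prefix formula: both free variables at the last point `x_c`. -/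
def preF (e : EAForm σ m) (c : ℕ) (h : c ≤ e.n) : EAForm σ 1 where
  n := c
  idx := fun _ => Fin.last c
  α := fun j => e.α ⟨j.val, by have := j.isLt; omega⟩
  βmid := fun j => e.βmid ⟨j.val, by have := j.isLt; omega⟩
  βlo := e.βlo
  βhi := .tt

/-- Suffix formula: both free variables at the first point `x_c`. -/
def sufF (e : EAForm σ m) (c : ℕ) (h : c ≤ e.n) : EAForm σ 1 where
  n := e.n - c
  idx := fun _ => 0
  α := fun j => e.α ⟨c + j.val, by have := j.isLt; omega⟩
  βmid := fun j => e.βmid ⟨c + j.val, by have := j.isLt; omega⟩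
  βlo := .tt
  βhi := e.βhi

variable {T : Type} [LinearOrder T] {I : σ → Set T}

lemma segF_sat (e : EAForm σ m) (c d : ℕ) (h : c + d ≤ e.n) (z₀ z₁ : T) :
    (segF e c d h).sat I ![z₀, z₁] ↔
      ∃ y : Fin (d + 1) → T, StrictMono y ∧ y 0 = z₀ ∧ y (Fin.last d) = z₁ ∧
        (∀ j : Fin (d + 1), (e.α ⟨c + j.val, by have := j.isLt; omega⟩).sat I (y j)) ∧
        (∀ j : Fin d, ∀ t, y j.castSucc < t → t < y j.succ →
          (e.βmid ⟨c + j.val, by have := j.isLt; omega⟩).sat I t) := by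
  constructor
  · rintro ⟨y, hmono, hz, hα, hβ, -, -⟩
    refine ⟨y, hmono, ?_, ?_, hα, hβ⟩
    · exact (hz 0).symm
    · exact (hz 1).symm
  · rintro ⟨y, hmono, h0, h1, hα, hβ⟩
    refine ⟨y, hmono, ?_, hα, hβ, ?_, ?_⟩
    · intro k
      fin_cases k <;> simp [segF, h0.symm, h1.symm]
    · intro t _; trivial
    · intro t _; trivial

lemma preF_sat (e : EAForm σ m) (c : ℕ) (h : c ≤ e.n) (z₀ z₁ : T) :
    (preF e c h).sat I ![z₀, z₁] ↔
      ∃ y : Fin (c + 1) → T, StrictMono y ∧ y (Fin.last c) = z₀ ∧ y (Fin.last c) = z₁ ∧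
        (∀ j : Fin (c + 1), (e.α ⟨j.val, by have := j.isLt; omega⟩).sat I (y j)) ∧
        (∀ j : Fin c, ∀ t, y j.castSucc < t → t < y j.succ →
          (e.βmid ⟨j.val, by have := j.isLt; omega⟩).sat I t) ∧
        (∀ t, t < y 0 → e.βlo.sat I t) := by
  constructor
  · rintro ⟨y, hmono, hz, hα, hβ, hlo, -⟩
    exact ⟨y, hmono, (hz 0).symm, (hz 1).symm, hα, hβ, hlo⟩
  · rintro ⟨y, hmono, h0, h1, hα, hβ, hlo⟩
    refine ⟨y, hmono, ?_, hα, hβ, hlo, ?_⟩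
    · intro k
      fin_cases k <;> simp [preF, h0.symm, h1.symm]
    · intro t _; trivial

lemma sufF_sat (e : EAForm σ m) (c : ℕ) (h : c ≤ e.n) (z₀ z₁ : T) :
    (sufF e c h).sat I ![z₀, z₁] ↔
      ∃ y : Fin (e.n - c + 1) → T, StrictMono y ∧ y 0 = z₀ ∧ y 0 = z₁ ∧
        (∀ j : Fin (e.n - c + 1), (e.α ⟨c + j.val, by have := j.isLt; omega⟩).sat I (y j)) ∧
        (∀ j : Fin (e.n - c), ∀ t, y j.castSucc < t → t < y j.succ →
          (e.βmid ⟨c + j.val, by have := j.isLt; omega⟩).sat I t) ∧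
        (∀ t, y (Fin.last (e.n - c)) < t → e.βhi.sat I t) := by
  constructor
  · rintro ⟨y, hmono, hz, hα, hβ, -, hhi⟩
    exact ⟨y, hmono, (hz 0).symm, (hz 1).symm, hα, hβ, hhi⟩
  · rintro ⟨y, hmono, h0, h1, hα, hβ, hhi⟩
    refine ⟨y, hmono, ?_, hα, hβ, ?_, hhi⟩
    · intro k
      fin_cases k <;> simp [sufF, h0.symm, h1.symm]
    · intro t _; trivial

lemma nat_cover (f : ℕ → ℕ) (j : ℕ) :
    ∀ M, f 0 ≤ j → j < f M → ∃ c < M, f c ≤ j ∧ j < f (c + 1) := by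
  intro M
  induction M with
  | zero => intro h1 h2; omega
  | succ M ih =>
    intro h1 h2
    by_cases h : f M ≤ j
    · exact ⟨M, Nat.lt_succ_self M, h, h2⟩
    · obtain ⟨c, hc, h3, h4⟩ := ih h1 (by omega)
      exact ⟨c, by omega, h3, h4⟩

end EA2V

/-- every ∃∀-formula is equivalent over all chains to a conjunction of
∃∀-formulas each with at most two free variables (here: exactly two, taken among the
original free variables). -/
theorem ea_to_two_var_conj (σ : Type) (m : ℕ) (e : EAForm σ m) :
    ∃ L : List (EAForm σ 1 × Fin (m + 1) × Fin (m + 1)),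
      ∀ (T : Type) [LinearOrder T] (I : σ → Set T) (z : Fin (m + 1) → T),
        e.sat I z ↔ ∀ p ∈ L, p.1.sat I ![z p.2.1, z p.2.2] := by
  classical
  set π : Equiv.Perm (Fin (m + 1)) := Tuple.sort (fun k : Fin (m + 1) => e.idx k) with hπ
  set u : Fin (m + 1) → ℕ := fun i => (e.idx (π i)).val with hu
  have humono : Monotone u := fun a b hab =>
    Tuple.monotone_sort (fun k : Fin (m + 1) => e.idx k) hab
  have hub : ∀ i, u i ≤ e.n := fun i => Nat.lt_succ_iff.mp (e.idx (π i)).isLt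
  have hcs : ∀ i : Fin m, u i.castSucc ≤ u i.succ := fun i =>
    humono (Fin.castSucc_le_succ i)
  have hseg_le : ∀ i : Fin m, u i.castSucc + (u i.succ - u i.castSucc) ≤ e.n := by
    intro i; have := hcs i; have := hub i.succ; omega
  refine ⟨(EA2V.preF e (u 0) (hub 0), π 0, π 0) ::
          (EA2V.sufF e (u (Fin.last m)) (hub (Fin.last m)), π (Fin.last m), π (Fin.last m)) ::
          List.ofFn (fun i : Fin m =>
            (EA2V.segF e (u i.castSucc) (u i.succ - u i.castSucc) (hseg_le i),
             π i.castSucc, π i.succ)), ?_⟩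
  intro T _ I z
  constructor
  · -- forward: decompose a witness
    rintro ⟨x, hxmono, hxz, hxα, hxβ, hxlo, hxhi⟩
    intro p hp
    simp only [List.mem_cons, List.mem_ofFn, Set.mem_range] at hp
    rcases hp with rfl | rfl | ⟨i, rfl⟩
    · -- prefix
      dsimp only
      rw [EA2V.preF_sat]
      refine ⟨fun j => x ⟨j.val, by have := j.isLt; have := hub 0; omega⟩,
        ?_, ?_, ?_, ?_, ?_, ?_⟩
      · intro a b hab
        have h := Fin.lt_def.mp hab
        exact hxmono (Fin.mk_lt_mk.mpr (by omega))
      · exact (hxz (π 0)).symm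
      · exact (hxz (π 0)).symm
      · intro j; exact hxα ⟨j.val, by have := j.isLt; have := hub 0; omega⟩
      · intro j t h1 h2
        exact hxβ ⟨j.val, by have := j.isLt; have := hub 0; omega⟩ t h1 h2
      · intro t ht
        have he : x ⟨((0 : Fin (u 0 + 1)) : ℕ), by have := hub 0; simp⟩ = x 0 :=
          congrArg x (Fin.ext (by simp))
        exact hxlo t (by rw [← he]; exact ht)
    · -- suffix
      dsimp only
      rw [EA2V.sufF_sat]
      refine ⟨fun j => x ⟨u (Fin.last m) + j.val,
          by have := j.isLt; have := hub (Fin.last m); omega⟩,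
        ?_, ?_, ?_, ?_, ?_, ?_⟩
      · intro a b hab
        have h := Fin.lt_def.mp hab
        exact hxmono (Fin.mk_lt_mk.mpr (by omega))
      · rw [hxz (π (Fin.last m))]
        refine congrArg x (Fin.ext ?_)
        show u (Fin.last m) + ((0 : Fin (e.n - u (Fin.last m) + 1)) : ℕ) = u (Fin.last m)
        simp
      · rw [hxz (π (Fin.last m))]
        refine congrArg x (Fin.ext ?_)
        show u (Fin.last m) + ((0 : Fin (e.n - u (Fin.last m) + 1)) : ℕ) = u (Fin.last m)
        simp
      · intro j
        exact hxα ⟨u (Fin.last m) + j.val,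
          by have := j.isLt; have := hub (Fin.last m); omega⟩
      · intro j t h1 h2
        exact hxβ ⟨u (Fin.last m) + j.val,
          by have := j.isLt; have := hub (Fin.last m); omega⟩ t h1 h2
      · intro t ht
        have he : x ⟨u (Fin.last m) + ((Fin.last (e.n - u (Fin.last m))) : ℕ),
            by have := hub (Fin.last m); simp only [Fin.val_last]; omega⟩ = x (Fin.last e.n) :=
          congrArg x (Fin.ext
            (by have := hub (Fin.last m); simp only [Fin.val_last]; omega))
        exact hxhi t (by rw [← he]; exact ht)
    · -- segment i
      dsimp only
      rw [EA2V.segF_sat]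
      refine ⟨fun j => x ⟨u i.castSucc + j.val,
          by have := j.isLt; have := hseg_le i; omega⟩,
        ?_, ?_, ?_, ?_, ?_⟩
      · intro a b hab
        have h := Fin.lt_def.mp hab
        exact hxmono (Fin.mk_lt_mk.mpr (by omega))
      · rw [hxz (π i.castSucc)]
        refine congrArg x (Fin.ext ?_)
        show u i.castSucc + ((0 : Fin (u i.succ - u i.castSucc + 1)) : ℕ) = u i.castSucc
        simp
      · rw [hxz (π i.succ)]
        refine congrArg x (Fin.ext ?_)
        show u i.castSucc + ((Fin.last (u i.succ - u i.castSucc)) : ℕ) = u i.succ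
        have := hcs i
        simp only [Fin.val_last]
        omega
      · intro j
        exact hxα ⟨u i.castSucc + j.val, by have := j.isLt; have := hseg_le i; omega⟩
      · intro j t h1 h2
        exact hxβ ⟨u i.castSucc + j.val, by have := j.isLt; have := hseg_le i; omega⟩ t h1 h2
  · -- backward: glue the witnesses
    intro h
    have hpre := h _ (List.mem_cons_self)
    rw [EA2V.preF_sat] at hpre
    obtain ⟨yp, hpmono, hp0, -, hpα, hpβ, hplo⟩ := hpre
    replace hp0 : yp (Fin.last (u 0)) = z (π 0) := hp0
    have hsuf := h _ (List.mem_cons_of_mem _ (List.mem_cons_self))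
    rw [EA2V.sufF_sat] at hsuf
    obtain ⟨ys, hsmono, hs0, -, hsα, hsβ, hshi⟩ := hsuf
    replace hs0 : ys 0 = z (π (Fin.last m)) := hs0
    have hseg := fun i : Fin m =>
      (EA2V.segF_sat e (u i.castSucc) (u i.succ - u i.castSucc) (hseg_le i)
        (z (π i.castSucc)) (z (π i.succ))).mp
        (h _ (List.mem_cons_of_mem _ (List.mem_cons_of_mem _ (by
          simp only [List.mem_ofFn, Set.mem_range]; exact ⟨i, rfl⟩))))
    choose yg hgmono hg0 hg1 hgα hgβ using hseg
    set X : ℕ → T := fun j =>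
      if h1 : j ≤ u 0 then yp ⟨j, by omega⟩
      else if h2 : ∃ i : Fin m, u i.castSucc < j ∧ j ≤ u i.succ then
        yg h2.choose ⟨j - u h2.choose.castSucc, by
          have hs := h2.choose_spec
          have := hcs h2.choose
          omega⟩
      else ys ⟨min (j - u (Fin.last m)) (e.n - u (Fin.last m)), by omega⟩
      with hXdef
    have ygc : ∀ (a b : Fin m), a = b → ∀ (v : ℕ)
        (hv : v - u a.castSucc < u a.succ - u a.castSucc + 1)
        (hv' : v - u b.castSucc < u b.succ - u b.castSucc + 1),
        yg a ⟨v - u a.castSucc, hv⟩ = yg b ⟨v - u b.castSucc, hv'⟩ := by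
      rintro a b rfl v hv hv'; rfl
    have hP1 : ∀ j (hj : j ≤ u 0), X j = yp ⟨j, by omega⟩ := by
      intro j hj
      simp only [hXdef]
      rw [dif_pos hj]
    have hP2 : ∀ (i : Fin m) (j : ℕ), u i.castSucc < j → j ≤ u i.succ →
        ∀ (hb : j - u i.castSucc < u i.succ - u i.castSucc + 1),
          X j = yg i ⟨j - u i.castSucc, hb⟩ := by
      intro i j hj1 hj2 hb
      have hne : ¬ j ≤ u 0 := by have := humono (Fin.zero_le i.castSucc); omega
      have hex : ∃ i' : Fin m, u i'.castSucc < j ∧ j ≤ u i'.succ := ⟨i, hj1, hj2⟩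
      simp only [hXdef]
      rw [dif_neg hne, dif_pos hex]
      have hspec := hex.choose_spec
      have hchoose : hex.choose = i := by
        rcases lt_trichotomy hex.choose i with hlt | heq | hlt
        · exfalso
          have h1 : hex.choose.succ ≤ i.castSucc := by
            rw [Fin.le_def]; rw [Fin.lt_def] at hlt
            simp only [Fin.val_succ, Fin.coe_castSucc]; omega
          have := humono h1; omega
        · exact heq
        · exfalso
          have h1 : i.succ ≤ hex.choose.castSucc := by
            rw [Fin.le_def]; rw [Fin.lt_def] at hlt
            simp only [Fin.val_succ, Fin.coe_castSucc]; omega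
          have := humono h1; omega
      exact ygc _ _ hchoose j _ _
    have hP4 : ∀ i : Fin (m + 1), X (u i) = z (π i) := by
      intro i
      induction i using Fin.induction with
      | zero =>
        rw [hP1 (u 0) le_rfl, ← hp0]
        exact congrArg yp (Fin.ext (by simp))
      | succ k ih =>
        by_cases hlt : u k.castSucc < u k.succ
        · rw [hP2 k (u k.succ) hlt le_rfl (by omega), ← hg1 k]
          exact congrArg (yg k) (Fin.ext (by simp))
        · have hle := hcs k
          have heq : u k.castSucc = u k.succ := by omega
          have h01 : z (π k.castSucc) = z (π k.succ) := by
            rw [← hg0 k, ← hg1 k]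
            exact congrArg (yg k) (Fin.ext (by simp; omega))
          rw [← heq, ih, h01]
    have hP2' : ∀ (i : Fin m) (j : ℕ), u i.castSucc ≤ j → j ≤ u i.succ →
        ∀ (hb : j - u i.castSucc < u i.succ - u i.castSucc + 1),
          X j = yg i ⟨j - u i.castSucc, hb⟩ := by
      intro i j hj1 hj2 hb
      rcases hj1.lt_or_eq with hlt | heq
      · exact hP2 i j hlt hj2 hb
      · subst heq
        rw [hP4 i.castSucc, ← hg0 i]
        exact congrArg (yg i) (Fin.ext (by simp))
    have hP3 : ∀ (j : ℕ), u (Fin.last m) ≤ j → j ≤ e.n →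
        ∀ (hb : j - u (Fin.last m) < e.n - u (Fin.last m) + 1),
          X j = ys ⟨j - u (Fin.last m), hb⟩ := by
      intro j hj1 hj2 hb
      rcases hj1.lt_or_eq with hlt | heq
      · have hne1 : ¬ j ≤ u 0 := by have := humono (Fin.zero_le (Fin.last m)); omega
        have hne2 : ¬ ∃ i : Fin m, u i.castSucc < j ∧ j ≤ u i.succ := by
          rintro ⟨i, -, hi2⟩
          have := humono (Fin.le_last i.succ); omega
        simp only [hXdef]
        rw [dif_neg hne1, dif_neg hne2]
        exact congrArg ys (Fin.ext (by simp; omega))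
      · subst heq
        rw [hP4 (Fin.last m), ← hs0]
        exact congrArg ys (Fin.ext (by simp))
    have hcov : ∀ j, u 0 ≤ j → j < u (Fin.last m) →
        ∃ i : Fin m, u i.castSucc ≤ j ∧ j < u i.succ := by
      intro j h1 h2
      have hf0 : u ⟨min 0 m, Nat.lt_succ_of_le (min_le_right 0 m)⟩ ≤ j := by
        have e0 : (⟨min 0 m, Nat.lt_succ_of_le (min_le_right 0 m)⟩ : Fin (m + 1)) = 0 :=
          Fin.ext (by simp)
        rw [e0]; exact h1
      have hfm : j < u ⟨min m m, Nat.lt_succ_of_le (min_le_right m m)⟩ := by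
        have em : (⟨min m m, Nat.lt_succ_of_le (min_le_right m m)⟩ : Fin (m + 1)) =
            Fin.last m := Fin.ext (show min m m = m by omega)
        rw [em]; exact h2
      obtain ⟨c, hcm, h3, h4⟩ := EA2V.nat_cover
        (fun c => u ⟨min c m, Nat.lt_succ_of_le (min_le_right c m)⟩) j m hf0 hfm
      refine ⟨⟨c, hcm⟩, ?_, ?_⟩
      · have e1 : (⟨min c m, Nat.lt_succ_of_le (min_le_right c m)⟩ : Fin (m + 1)) =
            (⟨c, hcm⟩ : Fin m).castSucc := Fin.ext (show min c m = c by omega)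
        rw [← e1]; exact h3
      · have e2 : (⟨min (c + 1) m, Nat.lt_succ_of_le (min_le_right (c + 1) m)⟩ : Fin (m + 1)) =
            (⟨c, hcm⟩ : Fin m).succ := Fin.ext (show min (c + 1) m = c + 1 by omega)
        rw [← e2]; exact h4
    have αcast : ∀ (a b : Fin (e.n + 1)), a = b → ∀ t, QF.sat I (e.α a) t →
        QF.sat I (e.α b) t := by rintro a b rfl t ht; exact ht
    have βcast : ∀ (a b : Fin e.n), a = b → ∀ t, QF.sat I (e.βmid a) t →
        QF.sat I (e.βmid b) t := by rintro a b rfl t ht; exact ht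
    have fcast : ∀ {k : ℕ} (f : Fin (k + 1) → T) (a b : Fin (k + 1)), a = b → f a = f b := by
      rintro k f a b rfl; rfl
    refine ⟨fun j => X j.val, ?_, ?_, ?_, ?_, ?_, ?_⟩
    · -- strict mono
      rw [Fin.strictMono_iff_lt_succ]
      intro i
      show X i.val < X (i.val + 1)
      have hjn : i.val + 1 ≤ e.n := i.isLt
      by_cases hc1 : i.val + 1 ≤ u 0
      · rw [hP1 i.val (by omega), hP1 (i.val + 1) hc1]
        exact hpmono (Fin.mk_lt_mk.mpr (by omega))
      · by_cases hc2 : u (Fin.last m) ≤ i.val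
        · rw [hP3 i.val hc2 (by omega) (by omega),
            hP3 (i.val + 1) (by omega) (by omega) (by omega)]
          exact hsmono (Fin.mk_lt_mk.mpr (by omega))
        · obtain ⟨i', hi1, hi2⟩ := hcov i.val (by omega) (by omega)
          rw [hP2' i' i.val hi1 (by omega) (by omega),
            hP2' i' (i.val + 1) (by omega) (by omega) (by omega)]
          exact hgmono i' (Fin.mk_lt_mk.mpr (by omega))
    · -- variables
      intro k
      have hk : π (π.symm k) = k := Equiv.apply_symm_apply _ _
      have hval : (e.idx k).val = u (π.symm k) := by
        show (e.idx k).val = (e.idx (π (π.symm k))).val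
        rw [hk]
      show z k = X (e.idx k).val
      rw [hval, hP4 (π.symm k), hk]
    · -- α
      intro j
      obtain ⟨jv, hjlt⟩ := j
      show (e.α ⟨jv, hjlt⟩).sat I (X jv)
      by_cases hc1 : jv ≤ u 0
      · rw [hP1 jv hc1]
        exact hpα ⟨jv, by omega⟩
      · by_cases hc2 : u (Fin.last m) ≤ jv
        · rw [hP3 jv hc2 (by omega) (by omega)]
          exact αcast _ _
            (Fin.ext (show u (Fin.last m) + (jv - u (Fin.last m)) = jv by omega)) _
            (hsα ⟨jv - u (Fin.last m), by have := hub (Fin.last m); omega⟩)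
        · obtain ⟨i', hi1, hi2⟩ := hcov jv (by omega) (by omega)
          rw [hP2' i' jv hi1 (by omega) (by omega)]
          exact αcast _ _
            (Fin.ext (show u i'.castSucc + (jv - u i'.castSucc) = jv by omega)) _
            (hgα i' ⟨jv - u i'.castSucc, by omega⟩)
    · -- βmid
      intro j t h1 h2
      obtain ⟨jv, hjlt⟩ := j
      replace h1 : X jv < t := h1
      replace h2 : t < X (jv + 1) := h2
      show (e.βmid ⟨jv, hjlt⟩).sat I t
      by_cases hc1 : jv + 1 ≤ u 0
      · rw [hP1 jv (by omega)] at h1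
        rw [hP1 (jv + 1) hc1] at h2
        exact hpβ ⟨jv, by omega⟩ t h1 h2
      · by_cases hc2 : u (Fin.last m) ≤ jv
        · rw [hP3 jv hc2 (by omega) (by omega)] at h1
          rw [hP3 (jv + 1) (by omega) (by omega) (by omega)] at h2
          have h2' : t < ys ⟨jv - u (Fin.last m) + 1, by omega⟩ :=
            h2.trans_eq (fcast ys _ _
              (Fin.ext (show jv + 1 - u (Fin.last m) = jv - u (Fin.last m) + 1 by omega)))
          have hb := hsβ ⟨jv - u (Fin.last m), by omega⟩ t h1 h2'
          exact βcast _ _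
            (Fin.ext (show u (Fin.last m) + (jv - u (Fin.last m)) = jv by omega)) t hb
        · obtain ⟨i', hi1, hi2⟩ := hcov jv (by omega) (by omega)
          rw [hP2' i' jv hi1 (by omega) (by omega)] at h1
          rw [hP2' i' (jv + 1) (by omega) (by omega) (by omega)] at h2
          have h2' : t < yg i' ⟨jv - u i'.castSucc + 1, by omega⟩ :=
            h2.trans_eq (fcast (yg i') _ _
              (Fin.ext (show jv + 1 - u i'.castSucc = jv - u i'.castSucc + 1 by omega)))
          have hb := hgβ i' ⟨jv - u i'.castSucc, by omega⟩ t h1 h2'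
          exact βcast _ _
            (Fin.ext (show u i'.castSucc + (jv - u i'.castSucc) = jv by omega)) t hb
    · -- βlo
      intro t ht
      replace ht : t < X ((0 : Fin (e.n + 1)) : ℕ) := ht
      rw [Fin.val_zero] at ht
      rw [hP1 0 (Nat.zero_le _)] at ht
      have he : yp ⟨0, by omega⟩ = yp 0 := congrArg yp (Fin.ext (by simp))
      rw [he] at ht
      exact hplo t ht
    · -- βhi
      intro t ht
      replace ht : X ((Fin.last e.n : Fin (e.n + 1)) : ℕ) < t := ht
      rw [Fin.val_last] at ht
      rw [hP3 e.n (hub (Fin.last m)) le_rfl (by omega)] at ht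
      have he : ys ⟨e.n - u (Fin.last m), by omega⟩ = ys (Fin.last (e.n - u (Fin.last m))) :=
        congrArg ys (Fin.ext (by simp))
      rw [he] at ht
      exact hshi t ht
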